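/- Let m ≥ 4, k ∈ {3,…,m−1}, and let B ⊆ {0,1,…,2^m−1} be a set of 3·2^{k−1} consecutive integers. Then every gap of the set φ₂(B) ∪ {0,1} is at most 3/2^{k+1}; that is, whenever t₁ < t₂ are elements of φ₂(B) ∪ {0,1} with no element of φ₂(B) ∪ {0,1} strictly between them, then t₂ − t₁ ≤ 3/2^{k+1}. -/

import Mathlib

/-- The `i`-th digit (1-based) of `n` in base `b`, with the convention that the
`0`-th digit is `0`. -/
def nthDigit (b n i : ℕ) : ℕ := if i = 0 then 0 else n / b ^ (i - 1) % b
/-- The radical-inverse (digit-reversal) function in base `b`, using `m` digits: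
`φ_b(n) = e₁/b + e₂/b² + ⋯ + e_m/b^m`. -/
noncomputable def radInv (b m n : ℕ) : ℝ :=
  ∑ i ∈ Finset.Icc 1 m, (nthDigit b n i : ℝ) / (b : ℝ) ^ i

/-- Bit reversal of the low `c` bits of `n`. -/
def rv : ℕ → ℕ → ℕ
  | 0, _ => 0
  | c+1, n => n % 2 * 2 ^ c + rv c (n / 2)

lemma rv_lt (c n : ℕ) : rv c n < 2 ^ c := by
  induction c generalizing n with
  | zero => simp [rv]
  | succ c ih =>
    have h1 : n % 2 ≤ 1 := by omega
    have h2 := ih (n / 2)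
    have h3 : n % 2 * 2 ^ c ≤ 1 * 2 ^ c := Nat.mul_le_mul_right _ h1
    have h4 : 2 ^ (c+1) = 2 ^ c * 2 := pow_succ 2 c
    show n % 2 * 2 ^ c + rv c (n / 2) < 2 ^ (c+1)
    omega

lemma rv_succ' (c n : ℕ) : rv (c+1) n = 2 * rv c n + n / 2 ^ c % 2 := by
  induction c generalizing n with
  | zero => simp [rv]
  | succ c ih =>
    show n % 2 * 2 ^ (c+1) + rv (c+1) (n / 2) = 2 * (n % 2 * 2 ^ c + rv c (n / 2)) + n / 2 ^ (c+1) % 2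
    rw [ih (n / 2)]
    have h1 : n / 2 / 2 ^ c = n / 2 ^ (c+1) := by
      rw [Nat.div_div_eq_div_mul]; congr 1; rw [pow_succ]; ring
    rw [h1]; ring

lemma rv_high (c : ℕ) : ∀ n v : ℕ, rv c (n + 2 ^ c * v) = rv c n := by
  induction c with
  | zero => intro n v; simp [rv]
  | succ c ih =>
    intro n v
    have h1 : (n + 2 ^ (c+1) * v) % 2 = n % 2 := by
      have : 2 ^ (c+1) * v = 2 * (2 ^ c * v) := by rw [pow_succ]; ring
      omega
    have h2 : (n + 2 ^ (c+1) * v) / 2 = n / 2 + 2 ^ c * v := by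
      have : 2 ^ (c+1) * v = 2 * (2 ^ c * v) := by rw [pow_succ]; ring
      omega
    have e1 : rv (c+1) (n + 2 ^ (c+1) * v) = (n + 2 ^ (c+1) * v) % 2 * 2 ^ c + rv c ((n + 2 ^ (c+1) * v) / 2) := rfl
    have e2 : rv (c+1) n = n % 2 * 2 ^ c + rv c (n / 2) := rfl
    rw [e1, e2, h1, h2, ih]

lemma rv_mod (c n : ℕ) : rv c (n % 2 ^ c) = rv c n := by
  conv_rhs => rw [← Nat.mod_add_div n (2 ^ c)]
  rw [rv_high]

lemma rv_inv (c : ℕ) : ∀ n : ℕ, n < 2 ^ c → rv c (rv c n) = n := by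
  induction c with
  | zero => intro n h; interval_cases n; simp [rv]
  | succ c ih =>
    intro n h
    have hp : 2 ^ (c+1) = 2 ^ c * 2 := pow_succ 2 c
    have hpos : 0 < 2 ^ c := Nat.pow_pos (by norm_num)
    show rv (c+1) (n % 2 * 2 ^ c + rv c (n / 2)) = n
    rw [rv_succ']
    have hu : rv c (n / 2) < 2 ^ c := rv_lt c _
    have hcomm : n % 2 * 2 ^ c + rv c (n / 2) = rv c (n / 2) + 2 ^ c * (n % 2) := by ring
    rw [hcomm, rv_high]
    have h1 : (rv c (n / 2) + 2 ^ c * (n % 2)) / 2 ^ c % 2 = n % 2 := by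
      rw [Nat.add_mul_div_left _ _ hpos, Nat.div_eq_of_lt hu]
      omega
    rw [h1, ih (n / 2) (by omega)]
    omega

lemma rv_split (c d : ℕ) : ∀ n : ℕ, rv (c + d) n = 2 ^ d * rv c n + rv d (n / 2 ^ c) := by
  induction c with
  | zero => intro n; simp [rv]
  | succ c ih =>
    intro n
    have h1 : c + 1 + d = (c + d) + 1 := by omega
    rw [h1]
    show n % 2 * 2 ^ (c + d) + rv (c + d) (n / 2) = 2 ^ d * rv (c+1) n + rv d (n / 2 ^ (c+1))
    rw [ih (n / 2)]
    have h2 : n / 2 / 2 ^ c = n / 2 ^ (c+1) := by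
      rw [Nat.div_div_eq_div_mul]; congr 1; rw [pow_succ]; ring
    rw [h2]
    show _ = 2 ^ d * (n % 2 * 2 ^ c + rv c (n / 2)) + rv d (n / 2 ^ (c+1))
    rw [pow_add]
    ring

lemma rv_step (c j : ℕ) : rv (c+1) (j+1) ≤ rv (c+1) j + 2 ^ c := by
  rcases Nat.even_or_odd j with he | ho
  · have h0 : j % 2 = 0 := Nat.even_iff.mp he
    have h1 : (j+1) % 2 = 1 := by omega
    have h2 : (j+1) / 2 = j / 2 := by omega
    show (j+1) % 2 * 2 ^ c + rv c ((j+1) / 2) ≤ j % 2 * 2 ^ c + rv c (j / 2) + 2 ^ c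
    rw [h0, h1, h2]; omega
  · have h0 : (j+1) % 2 = 0 := by have := Nat.odd_iff.mp ho; omega
    show (j+1) % 2 * 2 ^ c + rv c ((j+1) / 2) ≤ rv (c+1) j + 2 ^ c
    rw [h0]
    have := rv_lt c ((j+1) / 2)
    omega

lemma exists_mod (c a r : ℕ) : ∃ n, a ≤ n ∧ n < a + 2 ^ c ∧ n % 2 ^ c = r % 2 ^ c := by
  set T := 2 ^ c with hT
  have hTpos : 0 < T := Nat.pow_pos (by norm_num)
  have hd : T * (a / T) + a % T = a := Nat.div_add_mod a T
  have hm : a % T < T := Nat.mod_lt _ hTpos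
  have hr : r % T < T := Nat.mod_lt _ hTpos
  by_cases hc : a ≤ r % T + T * (a / T)
  · refine ⟨r % T + T * (a / T), hc, by omega, ?_⟩
    simp [Nat.add_mul_mod_self_left]
  · refine ⟨r % T + T * (a / T) + T, by omega, by omega, ?_⟩
    have : r % T + T * (a / T) + T = r % T + T * (a / T + 1) := by ring
    rw [this]
    simp [Nat.add_mul_mod_self_left]

lemma cellB (d c2 n r : ℕ) (h : n % 2 ^ c2 = r) :
    2 ^ d * rv c2 r ≤ rv (c2 + d) n ∧ rv (c2 + d) n < 2 ^ d * rv c2 r + 2 ^ d := by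
  have hs := rv_split c2 d n
  have hm : rv c2 r = rv c2 n := by rw [← h, rv_mod]
  have hl := rv_lt d (n / 2 ^ c2)
  constructor
  · rw [hs, hm]; exact Nat.le_add_right _ _
  · rw [hs, hm]; exact Nat.add_lt_add_left hl _

lemma core (d e a x : ℕ) (hx : x + 3 * 2 ^ d ≤ 2 ^ (e + 2 + d)) :
    ∃ n, (a ≤ n ∧ n < a + 3 * 2 ^ e) ∧ x < rv (e + 2 + d) n ∧
      rv (e + 2 + d) n ≤ x + 3 * 2 ^ d := by
  have hE1 : (2:ℕ) ^ (e+1) = 2 * 2 ^ e := by rw [pow_succ]; ring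
  have hE2 : (2:ℕ) ^ (e+2) = 2 * 2 ^ (e+1) := by rw [pow_succ]; ring
  have hPd : (2:ℕ) ^ (d+1) = 2 * 2 ^ d := by rw [pow_succ]; ring
  have hMsplit : (2:ℕ) ^ (e+2+d) = 2 ^ (e+1) * 2 ^ (d+1) := by
    rw [← pow_add]; congr 1; omega
  set j := x / 2 ^ (d+1) with hjdef
  have h1 : j * 2 ^ (d+1) ≤ x := Nat.div_mul_le_self x _
  have h2 : x < (j + 1) * 2 ^ (d+1) := by
    have h3 := Nat.div_add_mod x (2 ^ (d+1))
    have h4 : x % 2 ^ (d+1) < 2 ^ (d+1) := Nat.mod_lt _ (by positivity)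
    calc x = 2 ^ (d+1) * j + x % 2 ^ (d+1) := h3.symm
    _ < 2 ^ (d+1) * j + 2 ^ (d+1) := Nat.add_lt_add_left h4 _
    _ = (j+1) * 2 ^ (d+1) := by ring
  have hjlt : j + 1 < 2 ^ (e+1) := by
    by_contra hcon
    push_neg at hcon
    have hmul : 2 ^ (e+1) * 2 ^ (d+1) ≤ (j+1) * 2 ^ (d+1) :=
      Nat.mul_le_mul_right _ hcon
    have hsucc : (j+1) * 2 ^ (d+1) = j * 2 ^ (d+1) + 2 ^ (d+1) := by ring
    have hdpos : (1:ℕ) ≤ 2 ^ d := Nat.one_le_two_pow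
    omega
  set w' := rv (e+1) j with hw'def
  set w := rv (e+1) (j+1) with hwdef
  have hw'lt : w' < 2 ^ (e+1) := rv_lt _ _
  have hwlt : w < 2 ^ (e+1) := rv_lt _ _
  have hri1 : rv (e+1) w' = j := rv_inv _ _ (by omega)
  have hri2 : rv (e+1) w = j + 1 := rv_inv _ _ hjlt
  have hval : ∀ u : ℕ, u < 2 ^ (e+1) →
      rv (e+2) u = 2 * rv (e+1) u ∧ rv (e+2) (u + 2 ^ (e+1)) = 2 * rv (e+1) u + 1 := by
    intro u hu
    constructor
    · have h5 := rv_succ' (e+1) u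
      rw [Nat.div_eq_of_lt hu] at h5
      simpa using h5
    · have h6 : rv (e+1) (u + 2 ^ (e+1)) = rv (e+1) u := by
        have h7 : u + 2 ^ (e+1) = u + 2 ^ (e+1) * 1 := by ring
        rw [h7, rv_high]
      have h8 : (u + 2 ^ (e+1)) / 2 ^ (e+1) = 1 := by
        rw [Nat.add_div_right _ (by positivity), Nat.div_eq_of_lt hu]
      have h9 := rv_succ' (e+1) (u + 2 ^ (e+1))
      rw [h6, h8] at h9
      simpa using h9
  have vW : rv (e+2) w = 2*j + 2 := by rw [(hval w hwlt).1, hri2]; ring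
  have vW2 : rv (e+2) (w + 2 ^ (e+1)) = 2*j + 3 := by rw [(hval w hwlt).2, hri2]; ring
  have vW' : rv (e+2) w' = 2*j := by rw [(hval w' hw'lt).1, hri1]
  have vW'2 : rv (e+2) (w' + 2 ^ (e+1)) = 2*j + 1 := by rw [(hval w' hw'lt).2, hri1]
  obtain ⟨Q, hQ⟩ : ∃ Q, Q = 2 ^ d * j := ⟨_, rfl⟩
  have hx1 : 2*Q ≤ x := by
    rw [hQ]
    calc 2*(2 ^ d * j) = j * 2 ^ (d+1) := by rw [hPd]; ring
    _ ≤ x := h1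
  have hx2 : x < 2*Q + 2*2 ^ d := by
    rw [hQ]
    calc x < (j+1) * 2 ^ (d+1) := h2
    _ = 2*(2 ^ d * j) + 2*2 ^ d := by rw [hPd]; ring
  have hcb : ∀ n r c0 : ℕ, n % 2 ^ (e+2) = r → rv (e+2) r = 2*j + c0 →
      2*Q + c0*2 ^ d ≤ rv (e+2+d) n ∧ rv (e+2+d) n < 2*Q + c0*2 ^ d + 2 ^ d := by
    intro n r c0 hmod hv
    have hb := cellB d (e+2) n r hmod
    have he : 2 ^ d * rv (e+2) r = 2*Q + c0 * 2 ^ d := by rw [hv, hQ]; ring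
    rw [he] at hb
    exact hb
  have hsplit2 : ∀ n r : ℕ, n % 2 ^ (e+1) = r % 2 ^ (e+1) → r < 2 ^ (e+1) →
      n % 2 ^ (e+2) = r ∨ n % 2 ^ (e+2) = r + 2 ^ (e+1) := by
    intro n r hmod hrlt
    have hdvd : (2:ℕ) ^ (e+1) ∣ 2 ^ (e+2) := pow_dvd_pow 2 (by omega)
    have h1' : n % 2 ^ (e+2) % 2 ^ (e+1) = r := by
      rw [Nat.mod_mod_of_dvd n hdvd, hmod, Nat.mod_eq_of_lt hrlt]
    have h2' : n % 2 ^ (e+2) < 2 ^ (e+2) := Nat.mod_lt _ (by positivity)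
    rcases Nat.lt_or_ge (n % 2 ^ (e+2)) (2 ^ (e+1)) with hlt | hge
    · left; rw [← h1', Nat.mod_eq_of_lt hlt]
    · right
      have h3' : n % 2 ^ (e+2) % 2 ^ (e+1) = n % 2 ^ (e+2) - 2 ^ (e+1) := by
        rw [Nat.mod_eq_sub_mod hge, Nat.mod_eq_of_lt (by omega)]
      omega
  by_cases hc1 : ∃ n, (a ≤ n ∧ n < a + 3*2 ^ e) ∧ n % 2 ^ (e+2) = w
  · obtain ⟨n, hnB, hnr⟩ := hc1
    obtain ⟨hbl, hbh⟩ := hcb n w 2 hnr vW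
    exact ⟨n, hnB, by omega, by omega⟩
  · obtain ⟨n2, hn2a, hn2b, hn2m⟩ := exists_mod (e+1) a w
    have hn2B : a ≤ n2 ∧ n2 < a + 3*2 ^ e := ⟨hn2a, by omega⟩
    have hn2r : n2 % 2 ^ (e+2) = w + 2 ^ (e+1) := by
      rcases hsplit2 n2 w hn2m hwlt with h | h
      · exact absurd ⟨n2, hn2B, h⟩ hc1
      · exact h
    obtain ⟨h2bl, h2bh⟩ := hcb n2 (w + 2 ^ (e+1)) 3 hn2r vW2
    by_cases hc2 : ∃ n, (a ≤ n ∧ n < a + 3*2 ^ e) ∧ n % 2 ^ (e+2) = w' + 2 ^ (e+1)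
    · obtain ⟨n1, hn1B, hn1r⟩ := hc2
      obtain ⟨h1bl, h1bh⟩ := hcb n1 (w' + 2 ^ (e+1)) 1 hn1r vW'2
      by_cases hxc : x < rv (e+2+d) n1
      · exact ⟨n1, hn1B, hxc, by omega⟩
      · push_neg at hxc
        exact ⟨n2, hn2B, by omega, by omega⟩
    · obtain ⟨n1, hn1a, hn1b, hn1m⟩ := exists_mod (e+1) a w'
      have hn1B : a ≤ n1 ∧ n1 < a + 3*2 ^ e := ⟨hn1a, by omega⟩
      have hn1r : n1 % 2 ^ (e+2) = w' := by
        rcases hsplit2 n1 w' hn1m hw'lt with h | h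
        · exact h
        · exact absurd ⟨n1, hn1B, h⟩ hc2
      have hstep : w ≤ w' + 2 ^ e := rv_step e j
      obtain ⟨q1, hq1⟩ : ∃ q1, n1 = 2 ^ (e+2)*q1 + w' :=
        ⟨n1 / 2 ^ (e+2), by rw [← hn1r]; exact (Nat.div_add_mod n1 (2 ^ (e+2))).symm⟩
      set nn := 2 ^ (e+2)*q1 + (w + 2 ^ (e+1)) with hnn
      have hnnm : nn % 2 ^ (e+2) = w + 2 ^ (e+1) := by
        rw [hnn, Nat.mul_add_mod]
        exact Nat.mod_eq_of_lt (by omega)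
      have hD : w' + (w + 2 ^ (e+1) - w') = w + 2 ^ (e+1) := by omega
      have hnplus : n1 + (w + 2 ^ (e+1) - w') = nn := by
        rw [hq1, hnn, add_assoc, hD]
      by_cases hin : nn < a + 3*2 ^ e
      · have hnnB : a ≤ nn ∧ nn < a + 3*2 ^ e := ⟨by omega, hin⟩
        obtain ⟨hLl, hLh⟩ := hcb n1 w' 0 hn1r (by simpa using vW')
        obtain ⟨hHl, hHh⟩ := hcb nn (w + 2 ^ (e+1)) 3 hnnm vW2
        have hdiff : rv (e+2+d) nn = rv (e+2+d) n1 + 3 * 2 ^ d := by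
          have e1 := rv_split (e+2) d nn
          have e2 := rv_split (e+2) d n1
          have ediv : nn / 2 ^ (e+2) = q1 := by
            rw [hnn, Nat.mul_add_div (by positivity), Nat.div_eq_of_lt (by omega)]
            omega
          have ediv2 : n1 / 2 ^ (e+2) = q1 := by
            rw [hq1, Nat.mul_add_div (by positivity), Nat.div_eq_of_lt (by omega)]
            omega
          have em1 : rv (e+2) nn = 2*j+3 := by rw [← rv_mod, hnnm, vW2]
          have em2 : rv (e+2) n1 = 2*j := by rw [← rv_mod, hn1r, vW']
          rw [e1, e2, ediv, ediv2, em1, em2]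
          ring
        by_cases hxc : x < rv (e+2+d) n1
        · exact ⟨n1, hn1B, hxc, by omega⟩
        · push_neg at hxc
          exact ⟨nn, hnnB, by omega, by omega⟩
      · exfalso
        push_neg at hin
        set ns := 2 ^ (e+2)*q1 + w with hns
        have hnsm : ns % 2 ^ (e+2) = w := by
          rw [hns, Nat.mul_add_mod]
          exact Nat.mod_eq_of_lt (by omega)
        have hrel : ns + 2 ^ (e+1) = nn := by rw [hns, hnn]; ring
        exact hc1 ⟨ns, ⟨by omega, by omega⟩, hnsm⟩

lemma radInv_eq (m n : ℕ) : radInv 2 m n = (rv m n : ℝ) / 2 ^ m := by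
  induction m with
  | zero => simp [radInv, rv]
  | succ m ih =>
    have hd : nthDigit 2 n (m+1) = n / 2 ^ m % 2 := by simp [nthDigit]
    have hsum : radInv 2 (m+1) n
        = radInv 2 m n + (nthDigit 2 n (m+1) : ℝ) / (2:ℝ) ^ (m+1) := by
      unfold radInv
      rw [Finset.sum_Icc_succ_top (by omega : 1 ≤ m+1)]
      norm_num
    rw [hsum, ih, hd]
    have hr : rv (m+1) n = 2 * rv m n + n / 2 ^ m % 2 := rv_succ' m n
    rw [hr]
    have hne : (2:ℝ) ^ m ≠ 0 := by positivity
    push_cast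
    rw [pow_succ]
    field_simp

/-- For a set `B` of `3·2^{k−1}` consecutive integers in `{0,…,2^m−1}` with
`k ∈ {3,…,m−1}`, every gap of `φ₂(B) ∪ {0,1}` is at most `3/2^{k+1}`. -/
theorem radInv_gap_B (m k a : ℕ) (hm : 4 ≤ m) (hk1 : 3 ≤ k) (hkm : k ≤ m - 1)
    (ha : a + 3 * 2 ^ (k - 1) ≤ 2 ^ m) (S : Set ℝ)
    (hS : S = {0, 1} ∪ (fun n => radInv 2 m n) '' {n : ℕ | a ≤ n ∧ n < a + 3 * 2 ^ (k - 1)}) :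
    ∀ t₁ ∈ S, ∀ t₂ ∈ S, t₁ < t₂ → (∀ t ∈ S, ¬(t₁ < t ∧ t < t₂)) →
      t₂ - t₁ ≤ 3 / (2 : ℝ) ^ (k + 1) := by
  subst hS
  have hpm : (0:ℝ) < 2 ^ m := by positivity
  have hle1 : ∀ t ∈ ({0, 1} ∪ (fun n => radInv 2 m n) ''
      {n : ℕ | a ≤ n ∧ n < a + 3 * 2 ^ (k - 1)} : Set ℝ), t ≤ 1 := by
    rintro t ht
    simp only [Set.mem_union, Set.mem_insert_iff, Set.mem_singleton_iff, Set.mem_image,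
      Set.mem_setOf_eq] at ht
    rcases ht with (rfl | rfl) | ⟨n, _, rfl⟩
    · norm_num
    · norm_num
    · rw [radInv_eq, div_le_one hpm]
      have h2 : (rv m n : ℝ) < (2:ℝ) ^ m := by exact_mod_cast rv_lt m n
      exact h2.le
  intro t₁ h₁ t₂ h₂ hlt hbet
  have ht₂ : t₂ ≤ 1 := hle1 _ h₂
  simp only [Set.mem_union, Set.mem_insert_iff, Set.mem_singleton_iff, Set.mem_image,
    Set.mem_setOf_eq] at h₁
  have hrep : ∃ c₁ : ℕ, t₁ = (c₁ : ℝ) / 2 ^ m := by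
    rcases h₁ with (rfl | rfl) | ⟨n, _, rfl⟩
    · exact ⟨0, by norm_num⟩
    · exact absurd hlt (not_lt.mpr ht₂)
    · exact ⟨rv m n, radInv_eq m n⟩
  obtain ⟨c₁, hc₁⟩ := hrep
  have h3eq : (3:ℝ) * 2 ^ (m - k - 1) / 2 ^ m = 3 / 2 ^ (k+1) := by
    have hp : (2:ℝ) ^ (m - k - 1) * 2 ^ (k+1) = 2 ^ m := by
      rw [← pow_add]; congr 1; omega
    rw [div_eq_div_iff (ne_of_gt hpm) (by positivity : (2:ℝ)^(k+1) ≠ 0)]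
    calc (3:ℝ) * 2 ^ (m-k-1) * 2 ^ (k+1) = 3 * (2 ^ (m-k-1) * 2 ^ (k+1)) := by ring
    _ = 3 * 2 ^ m := by rw [hp]
  by_cases hcG : c₁ + 3 * 2 ^ (m - k - 1) ≤ 2 ^ m
  · have hm' : m = (k - 1) + 2 + (m - k - 1) := by omega
    obtain ⟨n, hnB, hxl, hxr⟩ := core (m - k - 1) (k - 1) a c₁ (by rw [← hm']; exact hcG)
    rw [← hm'] at hxl hxr
    have hzS : radInv 2 m n ∈ ({0, 1} ∪ (fun n => radInv 2 m n) ''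
        {n : ℕ | a ≤ n ∧ n < a + 3 * 2 ^ (k - 1)} : Set ℝ) :=
      Set.mem_union_right _ ⟨n, hnB, rfl⟩
    have hz := radInv_eq m n
    have hz1 : t₁ < radInv 2 m n := by
      rw [hz, hc₁]
      gcongr <;> exact_mod_cast hxl
    have hz2 : radInv 2 m n ≤ t₁ + 3 / 2 ^ (k+1) := by
      rw [hz, hc₁, ← h3eq, ← add_div]
      gcongr <;> exact_mod_cast hxr
    have hb := hbet _ hzS
    push_neg at hb
    have := hb hz1
    linarith
  · push_neg at hcG
    have hcast : (2:ℝ) ^ m ≤ (c₁ : ℝ) + 3 * 2 ^ (m - k - 1) := by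
      have h5 : (2:ℕ) ^ m ≤ c₁ + 3 * 2 ^ (m - k - 1) := le_of_lt hcG
      exact_mod_cast h5
    have hA : (1:ℝ) ≤ (c₁:ℝ)/2 ^ m + 3 * 2 ^ (m-k-1) / 2 ^ m := by
      calc (1:ℝ) = 2 ^ m / 2 ^ m := by rw [div_self (ne_of_gt hpm)]
      _ ≤ ((c₁:ℝ) + 3 * 2 ^ (m-k-1)) / 2 ^ m := by gcongr
      _ = (c₁:ℝ)/2 ^ m + 3 * 2 ^ (m-k-1)/2 ^ m := by ring
    rw [hc₁]
    linarith [h3eq, hA, ht₂]
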